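/- For a semigroup S with finitely many left ideals, the complement of the inclusion ideal graph In(S) contains no induced cycle of odd length at least 5; consequently (with the strong perfect graph theorem) In(S) is perfect. -/

import Mathlib

open Set

variable {S : Type*}

/-- A left ideal of a semigroup: a nonempty subset `I` with `S * I ⊆ I`. -/
def IsLeftIdeal [Semigroup S] (I : Set S) : Prop :=
  I.Nonempty ∧ ∀ s : S, ∀ x ∈ I, s * x ∈ I

/-- A nontrivial left ideal is a left ideal different from `S`. -/
def IsNontrivialLeftIdeal [Semigroup S] (I : Set S) : Prop :=
  IsLeftIdeal I ∧ I ≠ Set.univ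

/-- A minimal left ideal: a nontrivial left ideal properly containing no left ideal. -/
def IsMinimalLeftIdeal [Semigroup S] (I : Set S) : Prop :=
  IsNontrivialLeftIdeal I ∧ ∀ J : Set S, IsLeftIdeal J → J ⊆ I → J = I

/-- A maximal left ideal: a nontrivial left ideal properly contained in no
nontrivial left ideal. -/
def IsMaximalLeftIdeal [Semigroup S] (I : Set S) : Prop :=
  IsNontrivialLeftIdeal I ∧ ∀ J : Set S, IsNontrivialLeftIdeal J → I ⊆ J → J = I

/-- Vertices of the inclusion ideal graph: the nontrivial left ideals of `S`. -/
def IdealVert (S : Type*) [Semigroup S] := {I : Set S // IsNontrivialLeftIdeal I}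

/-- The inclusion ideal graph of a semigroup: distinct nontrivial left ideals are
adjacent iff one properly contains the other. -/
def inclusionIdealGraph (S : Type*) [Semigroup S] : SimpleGraph (IdealVert S) :=
  SimpleGraph.fromRel (fun I J => I.1 ⊂ J.1)

/-- The clique number of a graph, as `ℕ∞`. -/
noncomputable def cliqueNumE {V : Type*} (G : SimpleGraph V) : ℕ∞ :=
  ⨆ (s : Finset V) (_ : G.IsClique (s : Set V)), (s.card : ℕ∞)

/-- A graph is perfect if every induced subgraph has chromatic number equal to its
clique number. -/
def IsPerfect {V : Type*} (G : SimpleGraph V) : Prop :=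
  ∀ A : Set V, (G.induce A).chromaticNumber = cliqueNumE (G.induce A)

/-- The comparability graph of a finite partial order is weakly perfect:
its chromatic number equals its clique number. -/
lemma perfect_aux {V : Type*} [PartialOrder V] [Finite V] (G : SimpleGraph V)
    (hadj : ∀ u v, G.Adj u v ↔ u < v ∨ v < u) :
    G.chromaticNumber = cliqueNumE G := by
  have hle : cliqueNumE G ≤ G.chromaticNumber := by
    refine iSup₂_le fun s hs => ?_
    exact hs.card_le_chromaticNumber
  cases isEmpty_or_nonempty V with
  | inl h =>
    haveI := h
    have h0 : G.chromaticNumber = 0 := by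
      have hc : G.Colorable 0 := SimpleGraph.Colorable.of_isEmpty 0
      exact le_antisymm (by simpa using hc.chromaticNumber_le) zero_le
    rw [h0]
    exact (le_antisymm (h0 ▸ hle) zero_le).symm
  | inr h =>
    haveI := h
    cases nonempty_fintype V
    have hfin : ∀ v : V, Order.height v ≠ ⊤ := by
      intro v
      have hb : Order.height v ≤ (Fintype.card V : ℕ∞) :=
        Order.height_le fun p _ => by exact_mod_cast p.length_lt_card.le
      exact ne_top_of_le_ne_top (ENat.coe_ne_top _) hb
    classical
    obtain ⟨v₀, -, hmax⟩ := Finset.exists_max_image Finset.univ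
      (fun v : V => (Order.height v).toNat) ⟨Classical.arbitrary V, Finset.mem_univ _⟩
    set k := (Order.height v₀).toNat with hk0
    have hstrict : ∀ {u v : V}, u < v →
        (Order.height u).toNat < (Order.height v).toNat := by
      intro u v huv
      have h1 : Order.height u < Order.height v :=
        Order.height_strictMono huv (lt_top_iff_ne_top.mpr (hfin u))
      rwa [← ENat.coe_toNat (hfin u), ← ENat.coe_toNat (hfin v), Nat.cast_lt] at h1
    have hcol : G.Colorable (k + 1) := by
      refine ⟨SimpleGraph.Coloring.mk
        (fun v => ⟨(Order.height v).toNat,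
          Nat.lt_succ_of_le (hmax v (Finset.mem_univ v))⟩) ?_⟩
      intro u v huv hEq
      have hor := (hadj u v).mp huv
      have hne : (Order.height u).toNat ≠ (Order.height v).toNat := by
        rcases hor with h' | h'
        · exact (hstrict h').ne
        · exact (hstrict h').ne'
      exact hne (by simpa [Fin.ext_iff] using hEq)
    have hk : Order.height v₀ = (k : ℕ∞) := (ENat.coe_toNat (hfin v₀)).symm
    obtain ⟨p, hlast, hlen⟩ := Order.exists_series_of_height_eq_coe v₀ hk
    let s : Finset V := Finset.image p Finset.univ
    have hcard : s.card = k + 1 := by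
      rw [Finset.card_image_of_injective _ p.strictMono.injective]
      simp [hlen]
    have hclique : G.IsClique (s : Set V) := by
      intro x hx y hy hxy
      simp only [s, Finset.coe_image, Set.mem_image, Finset.mem_coe, Finset.coe_univ,
        Set.mem_univ, true_and] at hx hy
      obtain ⟨i, rfl⟩ := hx
      obtain ⟨j, rfl⟩ := hy
      rcases lt_trichotomy i j with hij | hij | hij
      · exact (hadj _ _).mpr (Or.inl (p.strictMono hij))
      · exact absurd (congrArg p hij) hxy
      · exact (hadj _ _).mpr (Or.inr (p.strictMono hij))
    have hge : ((k + 1 : ℕ) : ℕ∞) ≤ cliqueNumE G := by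
      have hle2 := le_iSup₂ (f := fun (t : Finset V) (_ : G.IsClique (t : Set V)) =>
        (t.card : ℕ∞)) s hclique
      rw [hcard] at hle2
      exact hle2
    have hχ : G.chromaticNumber ≤ ((k + 1 : ℕ) : ℕ∞) := hcol.chromaticNumber_le
    exact le_antisymm (hχ.trans hge) hle

instance [Semigroup S] : PartialOrder (IdealVert S) :=
  inferInstanceAs (PartialOrder {I : Set S // IsNontrivialLeftIdeal I})

open scoped Fin.NatCast Fin.IntCast Fin.CommRing

/-- For a semigroup with finitely many left ideals, the complement of `In(S)` contains
no induced odd cycle of length at least `5`; consequently, by the strong perfect graph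
theorem, `In(S)` is perfect. -/
theorem stmt12 [Semigroup S] (hfin : {I : Set S | IsLeftIdeal I}.Finite) :
    (∀ n : ℕ, Odd n → 5 ≤ n →
        IsEmpty (SimpleGraph.cycleGraph n ↪g (inclusionIdealGraph S)ᶜ)) ∧
      IsPerfect (inclusionIdealGraph S) := by
  constructor
  · intro n hodd h5
    constructor
    intro f
    obtain ⟨m, rfl⟩ : ∃ m, n = m + 2 := ⟨n - 2, by omega⟩
    have hm : 3 ≤ m := by omega
    set I : Fin (m + 2) → Set S := fun i => (f i : IdealVert S).1 with hI
    -- basic facts about casts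
    have castNe : ∀ (j : ℕ), 0 < j → j < m + 2 → ((j : Fin (m + 2)) ≠ 0) := by
      intro j h1 h2 h0
      rw [Fin.natCast_eq_zero] at h0
      have := Nat.le_of_dvd h1 h0
      omega
    -- i and i + j are not cycle-adjacent for 2 ≤ j ≤ m
    have hnotadj : ∀ (i : Fin (m + 2)) (j : ℕ), 2 ≤ j → j ≤ m →
        ¬(SimpleGraph.cycleGraph (m + 2)).Adj i (i + (j : Fin (m + 2))) := by
      intro i j h2 hj hadj
      rw [SimpleGraph.cycleGraph_adj] at hadj
      have e1 : i + (j : Fin (m + 2)) - i = (j : Fin (m + 2)) := by ring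
      have e2 : i - (i + (j : Fin (m + 2))) = -(j : Fin (m + 2)) := by ring
      rw [e1, e2] at hadj
      rcases hadj with h | h
      · have h' : ((j + 1 : ℕ) : Fin (m + 2)) = 0 := by
          push_cast
          rw [neg_eq_iff_eq_neg] at h
          rw [h]; ring
        exact castNe (j + 1) (by omega) (by omega) h'
      · have h' : ((j - 1 : ℕ) : Fin (m + 2)) = 0 := by
          rw [Nat.cast_sub (by omega : 1 ≤ j), h]
          simp
        exact castNe (j - 1) (by omega) (by omega) h'
    have hne : ∀ (i : Fin (m + 2)) (j : ℕ), 0 < j → j < m + 2 →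
        i ≠ i + (j : Fin (m + 2)) := by
      intro i j h1 h2 h
      have h' : (j : Fin (m + 2)) = 0 := by
        have := h.symm
        rwa [add_eq_left] at this
      exact castNe j h1 h2 h'
    -- from the embedding: non-adjacent distinct vertices in the cycle give comparable ideals
    have hGadj : ∀ a b : Fin (m + 2), ¬(SimpleGraph.cycleGraph (m + 2)).Adj a b → a ≠ b →
        (I a ⊂ I b ∨ I b ⊂ I a) := by
      intro a b hnadj hab
      have hfne : f a ≠ f b := fun h => hab (f.injective h)
      have h2 : (inclusionIdealGraph S).Adj (f a) (f b) := by
        by_contra h2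
        exact hnadj (f.map_rel_iff.mp ((SimpleGraph.compl_adj _ _ _).mpr ⟨hfne, h2⟩))
      exact ((SimpleGraph.fromRel_adj _ _ _).mp h2).2
    -- adjacent vertices in the cycle give incomparable ideals
    have hnc : ∀ a b : Fin (m + 2), (SimpleGraph.cycleGraph (m + 2)).Adj a b →
        ¬(I a ⊂ I b ∨ I b ⊂ I a) := by
      intro a b hadj hor
      have hfne : f a ≠ f b := fun h => hadj.ne (f.injective h)
      have h1 : (inclusionIdealGraph S)ᶜ.Adj (f a) (f b) := f.map_rel_iff.mpr hadj
      exact ((SimpleGraph.compl_adj _ _ _).mp h1).2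
        ((SimpleGraph.fromRel_adj _ _ _).mpr ⟨hfne, hor⟩)
    have hcomp : ∀ (i : Fin (m + 2)) (j : ℕ), 2 ≤ j → j ≤ m →
        I i ⊂ I (i + (j : Fin (m + 2))) ∨ I (i + (j : Fin (m + 2))) ⊂ I i := by
      intro i j h2 hj
      exact hGadj i (i + (j : Fin (m + 2))) (hnotadj i j h2 hj)
        (hne i j (by omega) (by omega))
    have hadj_consec : ∀ a : Fin (m + 2), (SimpleGraph.cycleGraph (m + 2)).Adj a (a + 1) := by
      intro a
      rw [SimpleGraph.cycleGraph_adj]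
      right; ring
    -- forcing step
    have F : ∀ (i : Fin (m + 2)) (j : ℕ), 2 ≤ j → j + 1 ≤ m →
        (I i ⊂ I (i + (j : Fin (m + 2))) ↔ I i ⊂ I (i + ((j + 1 : ℕ) : Fin (m + 2)))) := by
      intro i j h2 hj
      have hcast : ((j + 1 : ℕ) : Fin (m + 2)) = (j : Fin (m + 2)) + 1 := by push_cast; ring
      have hinc : ¬(I (i + (j : Fin (m + 2))) ⊂ I (i + ((j + 1 : ℕ) : Fin (m + 2))) ∨
          I (i + ((j + 1 : ℕ) : Fin (m + 2))) ⊂ I (i + (j : Fin (m + 2)))) := by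
        have := hnc (i + (j : Fin (m + 2))) (i + (j : Fin (m + 2)) + 1) (hadj_consec _)
        rwa [hcast, ← add_assoc]
      have c2 := hcomp i (j + 1) (by omega) hj
      have c1 := hcomp i j h2 (by omega)
      constructor
      · intro h
        rcases c2 with h2' | h2'
        · exact h2'
        · exact absurd (Or.inr (h2'.trans h)) hinc
      · intro h
        rcases c1 with h1' | h1'
        · exact h1'
        · exact absurd (Or.inl (h1'.trans h)) hinc
    -- propagation along the neighbours of i
    have L2 : ∀ (i : Fin (m + 2)) (j : ℕ), 2 ≤ j → j ≤ m →
        (I i ⊂ I (i + ((2 : ℕ) : Fin (m + 2))) ↔ I i ⊂ I (i + (j : Fin (m + 2)))) := by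
      intro i j h2
      induction j, h2 using Nat.le_induction with
      | base => intro _; exact Iff.rfl
      | succ j hj2 ih =>
        intro hj1
        exact (ih (by omega)).trans (F i j hj2 hj1)
    -- the alternation lemma
    have L3 : ∀ i : Fin (m + 2),
        (I (i + ((2 : ℕ) : Fin (m + 2))) ⊂
          I (i + ((2 : ℕ) : Fin (m + 2)) + ((2 : ℕ) : Fin (m + 2)))) ↔
        ¬(I i ⊂ I (i + ((2 : ℕ) : Fin (m + 2)))) := by
      intro i
      have h1 := L2 (i + ((2 : ℕ) : Fin (m + 2))) m (by omega) le_rfl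
      have e : i + ((2 : ℕ) : Fin (m + 2)) + ((m : ℕ) : Fin (m + 2)) = i := by
        have h0 : ((2 : ℕ) : Fin (m + 2)) + ((m : ℕ) : Fin (m + 2)) = 0 := by
          rw [← Nat.cast_add, Fin.natCast_eq_zero]
          exact ⟨1, by omega⟩
        rw [add_assoc, h0, add_zero]
      rw [e] at h1
      have c := hcomp i 2 le_rfl (by omega)
      constructor
      · intro hs hσ
        exact absurd (h1.mp hs) hσ.asymm
      · intro hns
        apply h1.mpr
        rcases c with h' | h'
        · exact absurd h' hns
        · exact h'
    -- iterate the alternation around the cycle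
    have step : ∀ j : ℕ,
        (I (((2 * (j + 1) : ℕ) : Fin (m + 2))) ⊂
          I (((2 * (j + 1) : ℕ) : Fin (m + 2)) + ((2 : ℕ) : Fin (m + 2)))) ↔
        ¬(I (((2 * j : ℕ) : Fin (m + 2))) ⊂
          I (((2 * j : ℕ) : Fin (m + 2)) + ((2 : ℕ) : Fin (m + 2)))) := by
      intro j
      have e : ((2 * (j + 1) : ℕ) : Fin (m + 2)) =
          ((2 * j : ℕ) : Fin (m + 2)) + ((2 : ℕ) : Fin (m + 2)) := by push_cast; ring
      rw [e]
      exact L3 _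
    have parity : ∀ j : ℕ,
        (Even j → ((I (((2 * j : ℕ) : Fin (m + 2))) ⊂
            I (((2 * j : ℕ) : Fin (m + 2)) + ((2 : ℕ) : Fin (m + 2)))) ↔
          (I (((2 * 0 : ℕ) : Fin (m + 2))) ⊂
            I (((2 * 0 : ℕ) : Fin (m + 2)) + ((2 : ℕ) : Fin (m + 2)))))) ∧
        (¬Even j → ((I (((2 * j : ℕ) : Fin (m + 2))) ⊂
            I (((2 * j : ℕ) : Fin (m + 2)) + ((2 : ℕ) : Fin (m + 2)))) ↔
          ¬(I (((2 * 0 : ℕ) : Fin (m + 2))) ⊂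
            I (((2 * 0 : ℕ) : Fin (m + 2)) + ((2 : ℕ) : Fin (m + 2)))))) := by
      intro j
      induction j with
      | zero => exact ⟨fun _ => Iff.rfl, fun h => absurd (Even.zero) h⟩
      | succ j ih =>
        constructor
        · intro hev
          have hodd' : ¬Even j := by
            rw [Nat.even_add_one] at hev
            exact hev
          rw [step j, ih.2 hodd']
          exact not_not
        · intro hnev
          have hev' : Even j := by
            rw [Nat.even_add_one] at hnev
            exact not_not.mp hnev
          rw [step j, ih.1 hev']
    -- conclude with the odd cycle length
    have hfull : ((2 * (m + 2) : ℕ) : Fin (m + 2)) = ((2 * 0 : ℕ) : Fin (m + 2)) := by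
      rw [Fin.natCast_eq_zero.mpr ⟨2, by ring⟩]
      simp
    have hoddm : ¬Even (m + 2) := by
      exact Nat.not_even_iff_odd.mpr hodd
    have := (parity (m + 2)).2 hoddm
    rw [hfull] at this
    exact (iff_not_self this).elim
  · intro A
    haveI hFin : Finite (IdealVert S) := by
      have h1 : {I : Set S | IsNontrivialLeftIdeal I}.Finite :=
        hfin.subset (fun I hI => hI.1)
      exact h1.to_subtype
    refine perfect_aux _ (fun u v => ?_)
    constructor
    · rintro ⟨hne, h | h⟩
      · exact Or.inl h
      · exact Or.inr h
    · rintro (h | h)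
      · exact ⟨ne_of_lt (show (u : IdealVert S) < (v : IdealVert S) from h), Or.inl h⟩
      · exact ⟨(ne_of_lt (show (v : IdealVert S) < (u : IdealVert S) from h)).symm, Or.inr h⟩
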